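/- Let X be a compact metric space and A ⊆ X a closed subset containing all isolated points of X. If d and d' are two admissible sequences in A, then there is a homeomorphism from I_d(X,A) to I_{d'}(X,A) which is the identity on X × {0}. In particular, up to homeomorphism, the space I(X,A) does not depend on the choice of admissible sequence. -/

import Mathlib

open Set Topology

/-- The space `I_d(X,A) ⊆ X × [0,1]`: the copy `X × {0}` of `X` together with the isolated
points `ã_n = (d_n, 1/n)` (here indexed by `n : ℕ`, with `ã_n = (d n, 1/(n+1))`). -/
def Itilde {X : Type*} [TopologicalSpace X] (d : ℕ → X) : Set (X × ℝ) :=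
  (Set.univ ×ˢ {(0 : ℝ)}) ∪ Set.range (fun n : ℕ => (d n, 1 / (n + 1 : ℝ)))

/-- A sequence `d` is admissible for `A` if it takes values in `A`, has dense range in `A`,
and attains each of its values at infinitely many indices. -/
def Admissible {X : Type*} [TopologicalSpace X] (A : Set X) (d : ℕ → X) : Prop :=
  (∀ n, d n ∈ A) ∧ A ⊆ closure (Set.range d) ∧ ∀ n, {m : ℕ | d m = d n}.Infinite

open Function Filter

section Aux

/-- Strengthened Schröder–Bernstein: the bijection agrees pointwise with `f` or with `g⁻¹`. -/
lemma sb_strong {f g : ℕ → ℕ} (hf : Injective f) (hg : Injective g) :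
    ∃ e : ℕ ≃ ℕ, ∀ n, e n = f n ∨ g (e n) = n := by
  classical
  set F : Set ℕ →o Set ℕ :=
    { toFun := fun s => (g '' (f '' s)ᶜ)ᶜ
      monotone' := fun s t hst =>
        compl_subset_compl.mpr <| image_mono <| compl_subset_compl.mpr <| image_mono hst }
  set s : Set ℕ := F.lfp
  have hs : (g '' (f '' s)ᶜ)ᶜ = s := F.map_lfp
  have hns : g '' (f '' s)ᶜ = sᶜ := compl_injective (by simp [hs])
  set g' := invFun g
  have g'g : LeftInverse g' g := leftInverse_invFun hg
  have hg'ns : g' '' sᶜ = (f '' s)ᶜ := by rw [← hns, g'g.image_image]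
  set h : ℕ → ℕ := s.piecewise f g'
  have hsurj : Surjective h := by rw [← range_eq_univ, range_piecewise, hg'ns, union_compl_self]
  have hinj : Injective h := by
    refine (injective_piecewise_iff _).2 ⟨hf.injOn, ?_, ?_⟩
    · intro x hx y hy hxy
      obtain ⟨x', _, rfl⟩ : x ∈ g '' (f '' s)ᶜ := by rwa [hns]
      obtain ⟨y', _, rfl⟩ : y ∈ g '' (f '' s)ᶜ := by rwa [hns]
      rw [g'g _, g'g _] at hxy
      rw [hxy]
    · intro x hx y hy hxy
      obtain ⟨y', hy', rfl⟩ : y ∈ g '' (f '' s)ᶜ := by rwa [hns]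
      rw [g'g _] at hxy
      exact hy' ⟨x, hx, hxy⟩
  refine ⟨Equiv.ofBijective h ⟨hinj, hsurj⟩, fun n => ?_⟩
  by_cases hn : n ∈ s
  · left
    show h n = f n
    exact s.piecewise_eq_of_mem _ _ hn
  · right
    obtain ⟨b, _, rfl⟩ : n ∈ g '' (f '' s)ᶜ := by rwa [hns]
    show g (h (g b)) = g b
    have : h (g b) = g' (g b) := s.piecewise_eq_of_notMem _ _ hn
    rw [this, g'g b]

lemma od_inj {m n : ℕ} (h : 1 / ((m : ℝ) + 1) = 1 / ((n : ℝ) + 1)) : m = n := by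
  have hm : ((m : ℝ) + 1) ≠ 0 := by positivity
  have hn : ((n : ℝ) + 1) ≠ 0 := by positivity
  field_simp at h
  have h2 : n = m := by have h3 : n + 1 = m + 1 := (by exact_mod_cast h); omega
  omega

lemma od_lt {m n : ℕ} (h : 1 / ((m : ℝ) + 1) < 1 / ((n : ℝ) + 1)) : n < m := by
  by_contra hc
  push_neg at hc
  have h2 : ((m : ℝ) + 1) ≤ (n : ℝ) + 1 := by exact_mod_cast Nat.succ_le_succ hc
  have : 1 / ((n : ℝ) + 1) ≤ 1 / ((m : ℝ) + 1) :=
    one_div_le_one_div_of_le (by positivity) h2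
  linarith

lemma lt_od {m n : ℕ} (h : n < m) : 1 / ((m : ℝ) + 1) < 1 / ((n : ℝ) + 1) := by
  apply one_div_lt_one_div_of_lt (by positivity)
  exact_mod_cast Nat.succ_lt_succ h

variable {X : Type*} [MetricSpace X]

/-- From admissibility: a strictly monotone approximation of `d` by values of `d'`. -/
lemma exists_approx {A : Set X} {d d' : ℕ → X}
    (hd : Admissible A d) (hd' : Admissible A d') :
    ∃ f : ℕ → ℕ, StrictMono f ∧ ∀ n, dist (d n) (d' (f n)) ≤ 1 / ((n : ℝ) + 1) := by
  have key : ∀ n b : ℕ, ∃ m, b < m ∧ dist (d n) (d' m) ≤ 1 / ((n : ℝ) + 1) := by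
    intro n b
    have hdn : d n ∈ closure (Set.range d') := hd'.2.1 (hd.1 n)
    rw [Metric.mem_closure_iff] at hdn
    obtain ⟨y, ⟨m0, rfl⟩, hy⟩ := hdn (1 / ((n : ℝ) + 1)) (by positivity)
    have hinf : {m : ℕ | d' m = d' m0}.Infinite := hd'.2.2 m0
    obtain ⟨m, hm, hbm⟩ := hinf.exists_gt b
    exact ⟨m, hbm, by rw [show d' m = d' m0 from hm]; exact hy.le⟩
  let f : ℕ → ℕ := fun n =>
    Nat.rec (key 0 0).choose (fun n ih => (key (n + 1) ih).choose) n
  have hf0 : ∀ n, f (n + 1) = (key (n + 1) (f n)).choose := fun n => rfl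
  have hmono : StrictMono f := by
    apply strictMono_nat_of_lt_succ
    intro n
    rw [hf0 n]
    exact (key (n + 1) (f n)).choose_spec.1
  refine ⟨f, hmono, ?_⟩
  intro n
  cases n with
  | zero => exact (key 0 0).choose_spec.2
  | succ n => rw [hf0 n]; exact (key (n + 1) (f n)).choose_spec.2

/-- The matching bijection with vanishing distance. -/
lemma exists_equiv {A : Set X} {d d' : ℕ → X}
    (hd : Admissible A d) (hd' : Admissible A d') :
    ∃ e : ℕ ≃ ℕ, Tendsto (fun n => dist (d n) (d' (e n))) atTop (nhds 0) := by
  obtain ⟨f, hfm, hfd⟩ := exists_approx hd hd'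
  obtain ⟨g, hgm, hgd⟩ := exists_approx hd' hd
  obtain ⟨e, he⟩ := sb_strong hfm.injective hgm.injective
  refine ⟨e, ?_⟩
  have hb : ∀ n, dist (d n) (d' (e n)) ≤ max (1 / ((n : ℝ) + 1)) (1 / ((e n : ℝ) + 1)) := by
    intro n
    rcases he n with h | h
    · exact le_max_of_le_left (h ▸ hfd n)
    · have h2 := hgd (e n)
      rw [h] at h2
      rw [dist_comm]
      exact le_max_of_le_right h2
  have h1 : Tendsto (fun n : ℕ => 1 / ((n : ℝ) + 1)) atTop (nhds 0) :=
    tendsto_one_div_add_atTop_nhds_zero_nat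
  have h2 : Tendsto e atTop atTop := by
    have := e.injective.tendsto_cofinite
    rwa [Nat.cofinite_eq_atTop] at this
  have h3 : Tendsto (fun n : ℕ => max (1 / ((n : ℝ) + 1)) (1 / ((e n : ℝ) + 1))) atTop
      (nhds 0) := by
    have := h1.max (h1.comp h2)
    simpa [Function.comp_def] using this
  exact squeeze_zero (fun n => dist_nonneg) hb h3

open scoped Classical in
/-- The underlying map of the homeomorphism. -/
noncomputable def imap (d d' : ℕ → X) (e : ℕ ≃ ℕ) (p : Itilde d) : X × ℝ :=
  if h : ∃ n : ℕ, (p : X × ℝ) = (d n, 1 / ((n : ℝ) + 1)) then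
    (d' (e h.choose), 1 / ((e h.choose : ℝ) + 1))
  else ((p : X × ℝ).1, 0)

lemma imap_of_eq {d : ℕ → X} (d' : ℕ → X) (e : ℕ ≃ ℕ) (p : Itilde d) (n : ℕ)
    (hp : (p : X × ℝ) = (d n, 1 / ((n : ℝ) + 1))) :
    imap d d' e p = (d' (e n), 1 / ((e n : ℝ) + 1)) := by
  have h : ∃ n : ℕ, (p : X × ℝ) = (d n, 1 / ((n : ℝ) + 1)) := ⟨n, hp⟩
  have hcn : h.choose = n := by
    have h2 : (d n, 1 / ((n : ℝ) + 1)) = (d h.choose, 1 / ((h.choose : ℝ) + 1)) :=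
      hp.symm.trans h.choose_spec
    exact (od_inj (congrArg Prod.snd h2)).symm
  unfold imap
  rw [dif_pos h, hcn]

lemma imap_of_zero {d : ℕ → X} (d' : ℕ → X) (e : ℕ ≃ ℕ) (p : Itilde d)
    (hp : (p : X × ℝ).2 = 0) : imap d d' e p = (p : X × ℝ) := by
  have h : ¬∃ n : ℕ, (p : X × ℝ) = (d n, 1 / ((n : ℝ) + 1)) := by
    rintro ⟨n, hn⟩
    have : (0 : ℝ) < 1 / ((n : ℝ) + 1) := by positivity
    rw [hn] at hp
    simp only at hp
    linarith [hp]
  unfold imap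
  rw [dif_neg h]
  exact Prod.ext rfl hp.symm

lemma mem_cases {d : ℕ → X} (p : Itilde d) :
    (p : X × ℝ).2 = 0 ∨ ∃ n : ℕ, (p : X × ℝ) = (d n, 1 / ((n : ℝ) + 1)) := by
  rcases p.2 with h | ⟨n, hn⟩
  · exact Or.inl h.2
  · exact Or.inr ⟨n, hn.symm⟩

lemma imap_mem {d : ℕ → X} (d' : ℕ → X) (e : ℕ ≃ ℕ) (p : Itilde d) :
    imap d d' e p ∈ Itilde d' := by
  rcases mem_cases p with h | ⟨n, hn⟩
  · rw [imap_of_zero d' e p h]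
    exact Or.inl ⟨Set.mem_univ _, h⟩
  · rw [imap_of_eq d' e p n hn]
    exact Or.inr ⟨e n, rfl⟩

/-- The homeomorphism as a function between the subtypes. -/
noncomputable def imapFull (d d' : ℕ → X) (e : ℕ ≃ ℕ) (p : Itilde d) : Itilde d' :=
  ⟨imap d d' e p, imap_mem d' e p⟩

lemma imapFull_leftInv (d d' : ℕ → X) (e : ℕ ≃ ℕ) (p : Itilde d) :
    imapFull d' d e.symm (imapFull d d' e p) = p := by
  apply Subtype.ext
  have hv : ((imapFull d d' e p : Itilde d') : X × ℝ) = imap d d' e p := rfl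
  rcases mem_cases p with h | ⟨n, hn⟩
  · have h1 : imap d d' e p = (p : X × ℝ) := imap_of_zero d' e p h
    show imap d' d e.symm (imapFull d d' e p) = (p : X × ℝ)
    rw [imap_of_zero d e.symm (imapFull d d' e p) (by rw [hv, h1]; exact h), hv, h1]
  · have h1 : imap d d' e p = (d' (e n), 1 / ((e n : ℝ) + 1)) := imap_of_eq d' e p n hn
    show imap d' d e.symm (imapFull d d' e p) = (p : X × ℝ)
    rw [imap_of_eq d e.symm (imapFull d d' e p) (e n) (by rw [hv, h1]),
      Equiv.symm_apply_apply, hn]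

lemma imap_continuous (d d' : ℕ → X) (e : ℕ ≃ ℕ)
    (h0 : Tendsto (fun n => dist (d n) (d' (e n))) atTop (nhds 0)) :
    Continuous fun p : Itilde d => imap d d' e p := by
  rw [continuous_iff_continuousAt]
  intro p
  rcases mem_cases p with hp | ⟨n, hn⟩
  · -- point on X × {0}
    rw [Metric.continuousAt_iff]
    intro ε hε
    obtain ⟨N₁, hN₁⟩ := (Metric.tendsto_atTop.1 h0) (ε / 2) (by linarith)
    have h2 : Tendsto e atTop atTop := by
      have := e.injective.tendsto_cofinite
      rwa [Nat.cofinite_eq_atTop] at this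
    have h1 : Tendsto (fun n : ℕ => 1 / ((e n : ℝ) + 1)) atTop (nhds 0) :=
      tendsto_one_div_add_atTop_nhds_zero_nat.comp h2
    obtain ⟨N₂, hN₂⟩ := (Metric.tendsto_atTop.1 h1) (ε / 2) (by linarith)
    set N := max N₁ N₂ with hN
    refine ⟨min (ε / 2) (1 / ((N : ℝ) + 1)), lt_min (by linarith) (by positivity), ?_⟩
    intro q hq
    rw [Subtype.dist_eq] at hq
    have hfp : imap d d' e p = (p : X × ℝ) := imap_of_zero d' e p hp
    rcases mem_cases q with hq0 | ⟨m, hm⟩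
    · rw [imap_of_zero d' e q hq0, hfp]
      calc dist (q : X × ℝ) (p : X × ℝ) < min (ε / 2) (1 / ((N : ℝ) + 1)) := hq
        _ ≤ ε / 2 := min_le_left _ _
        _ < ε := by linarith
    · rw [imap_of_eq d' e q m hm, hfp]
      have hpv : (p : X × ℝ) = ((p : X × ℝ).1, 0) := Prod.ext rfl hp
      rw [hpv, hm] at hq
      rw [Prod.dist_eq] at hq
      have hd1 : dist (d m) (p : X × ℝ).1 < min (ε / 2) (1 / ((N : ℝ) + 1)) :=
        lt_of_le_of_lt (le_max_left _ _) hq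
      have hd2 : dist (1 / ((m : ℝ) + 1)) (0 : ℝ) < min (ε / 2) (1 / ((N : ℝ) + 1)) :=
        lt_of_le_of_lt (le_max_right _ _) hq
      have hd2' : 1 / ((m : ℝ) + 1) < 1 / ((N : ℝ) + 1) := by
        rw [Real.dist_eq, sub_zero, abs_of_pos (by positivity)] at hd2
        exact lt_of_lt_of_le hd2 (min_le_right _ _)
      have hmN : N < m := od_lt hd2'
      have hm1 : N₁ ≤ m := le_trans (le_max_left _ _) hmN.le
      have hm2 : N₂ ≤ m := le_trans (le_max_right _ _) hmN.le
      have e1 : dist (d m) (d' (e m)) < ε / 2 := by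
        have := hN₁ m hm1
        rwa [Real.dist_eq, sub_zero, abs_of_nonneg dist_nonneg] at this
      have e2 : 1 / ((e m : ℝ) + 1) < ε / 2 := by
        have := hN₂ m hm2
        rwa [Real.dist_eq, sub_zero, abs_of_pos (by positivity)] at this
      rw [hpv, Prod.dist_eq]
      apply max_lt
      · calc dist (d' (e m)) (p : X × ℝ).1 ≤ dist (d' (e m)) (d m) + dist (d m) (p : X × ℝ).1 :=
            dist_triangle _ _ _
          _ < ε / 2 + ε / 2 := by
              apply add_lt_add
              · rw [dist_comm]; exact e1
              · exact lt_of_lt_of_le hd1 (le_trans (min_le_left _ _) le_rfl)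
          _ = ε := by ring
      · rw [Real.dist_eq, sub_zero, abs_of_pos (by positivity)]
        linarith
  · -- isolated point: the singleton is open
    have hopen : IsOpen ({p} : Set (Itilde d)) := by
      rw [isOpen_induced_iff]
      refine ⟨{q : X × ℝ | 1 / ((n : ℝ) + 2) < q.2} ∩
        ((fun m : ℕ => (d m, 1 / ((m : ℝ) + 1))) '' Set.Iio n)ᶜ, ?_, ?_⟩
      · apply IsOpen.inter
        · exact isOpen_lt continuous_const continuous_snd
        · exact (((Set.finite_Iio n).image _).isClosed).isOpen_compl
      · ext q
        simp only [Set.mem_preimage, Set.mem_inter_iff, Set.mem_setOf_eq, Set.mem_compl_iff,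
          Set.mem_singleton_iff]
        constructor
        · rintro ⟨hq1, hq2⟩
          rcases mem_cases q with hq0 | ⟨m, hm⟩
          · exfalso
            rw [hq0] at hq1
            have : (0 : ℝ) < 1 / ((n : ℝ) + 2) := by positivity
            linarith
          · have hm2 : (q : X × ℝ).2 = 1 / ((m : ℝ) + 1) := by rw [hm]
            rw [hm2] at hq1
            have hq1' : 1 / (((n + 1 : ℕ) : ℝ) + 1) < 1 / ((m : ℝ) + 1) := by
              push_cast
              convert hq1 using 2
              ring
            have hmn : m < n + 1 := od_lt hq1'
            have hge : ¬ m < n := by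
              intro hlt
              exact hq2 ⟨m, hlt, hm.symm⟩
            have : m = n := by omega
            apply Subtype.ext
            rw [hm, hn, this]
        · rintro rfl
          constructor
          · rw [hn]
            have : 1 / (((n + 1 : ℕ) : ℝ) + 1) < 1 / ((n : ℝ) + 1) := lt_od (by omega)
            have h2 : ((n + 1 : ℕ) : ℝ) + 1 = (n : ℝ) + 2 := by push_cast; ring
            rw [h2] at this
            exact this
          · rintro ⟨m, hm, hmeq⟩
            rw [hn] at hmeq
            have hmn := od_inj (congrArg Prod.snd hmeq)
            have hm' : m < n := hm
            omega
    have hnhds : nhds p = pure p := (isOpen_singleton_iff_nhds_eq_pure p).1 hopen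
    unfold ContinuousAt
    rw [hnhds]
    exact tendsto_pure_nhds _ _
  
end Aux

/-- for two admissible sequences `d, d'` in `A` there is a homeomorphism
`I_d(X,A) → I_{d'}(X,A)` fixing `X × {0}` pointwise; so `I(X,A)` is well defined up to
homeomorphism. -/
theorem Itilde_independent_of_sequence
    {X : Type*} [MetricSpace X] [CompactSpace X]
    {A : Set X} (hA : IsClosed A)
    (hAiso : ∀ x : X, IsOpen ({x} : Set X) → x ∈ A)
    {d d' : ℕ → X} (hd : Admissible A d) (hd' : Admissible A d') :
    ∃ f : (Itilde d : Type _) ≃ₜ (Itilde d' : Type _),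
      ∀ x : X, (f ⟨(x, 0), Or.inl (Set.mk_mem_prod (Set.mem_univ x) rfl)⟩ : X × ℝ)
        = (x, 0) := by
  obtain ⟨e, h0⟩ := exists_equiv hd hd'
  have hrev : Tendsto (fun n => dist (d' n) (d (e.symm n))) atTop (nhds 0) := by
    have h2s : Tendsto e.symm atTop atTop := by
      have := e.symm.injective.tendsto_cofinite
      rwa [Nat.cofinite_eq_atTop] at this
    have := h0.comp h2s
    simpa [Function.comp_def, dist_comm] using this
  refine ⟨{ toFun := imapFull d d' e
            invFun := imapFull d' d e.symm
            left_inv := imapFull_leftInv d d' e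
            right_inv := ?_
            continuous_toFun := by
              apply Continuous.subtype_mk
              exact imap_continuous d d' e h0
            continuous_invFun := by
              apply Continuous.subtype_mk
              exact imap_continuous d' d e.symm hrev }, ?_⟩
  · intro q
    have := imapFull_leftInv d' d e.symm q
    rwa [Equiv.symm_symm] at this
  · intro x
    exact imap_of_zero d' e
      ⟨(x, 0), Or.inl (Set.mk_mem_prod (Set.mem_univ x) rfl)⟩ rfl
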